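/- Let m be a positive even integer and n a positive odd integer with gcd(m,n) = 1. The number of group homomorphisms from D_m into D_n is 3n + 1. -/

import Mathlib

open DihedralGroup

namespace NumHomAux

variable {m n : ℕ}

lemma pow_of_mod_two {G : Type*} [Monoid G] {a : G} (ha : a ^ 2 = 1) {k l : ℕ}
    (h : k % 2 = l % 2) : a ^ k = a ^ l := by
  have h1 : ∀ k : ℕ, a ^ k = a ^ (k % 2) := by
    intro k
    conv_lhs => rw [← Nat.div_add_mod k 2]
    rw [pow_add, pow_mul, ha, one_pow, one_mul]
  rw [h1 k, h1 l, h]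

lemma val_add_parity [NeZero m] (hm2 : 2 ∣ m) (x y : ZMod m) :
    (x + y).val % 2 = (x.val + y.val) % 2 := by
  rw [ZMod.val_add, Nat.mod_mod_of_dvd _ hm2]

lemma val_neg_parity [NeZero m] (hm2 : 2 ∣ m) (x : ZMod m) :
    (-x).val % 2 = x.val % 2 := by
  have h := val_add_parity hm2 x (-x)
  rw [add_neg_cancel, ZMod.val_zero] at h
  omega

lemma val_sub_parity [NeZero m] (hm2 : 2 ∣ m) (x y : ZMod m) :
    (x - y).val % 2 = (x.val + y.val) % 2 := by
  rw [sub_eq_add_neg, val_add_parity hm2, Nat.add_mod, val_neg_parity hm2, ← Nat.add_mod]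

lemma r_pow (i : ZMod n) (k : ℕ) : (r i : DihedralGroup n) ^ k = r ((k : ZMod n) * i) := by
  induction k with
  | zero => simp [one_def, -r_zero]
  | succ k ih =>
    rw [pow_succ, ih, r_mul_r]
    congr 1
    push_cast
    ring

/-- The hom `DihedralGroup m →* DihedralGroup n` from a commuting pair of involutions. -/
def mkHom [NeZero m] (hm2 : 2 ∣ m) {a b : DihedralGroup n} (ha : a ^ 2 = 1)
    (hb : b ^ 2 = 1) (hab : a * b = b * a) : DihedralGroup m →* DihedralGroup n where
  toFun x := match x with
    | r i => a ^ i.val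
    | sr i => b * a ^ i.val
  map_one' := by
    show a ^ (0 : ZMod m).val = 1
    simp
  map_mul' := by
    have hcomm : ∀ k : ℕ, a ^ k * b = b * a ^ k := fun k =>
      ((Commute.pow_left (hab : Commute a b) k) : _)
    have hb' : b * b = 1 := by rw [← pow_two, hb]
    have hadd : ∀ x y : ZMod m, a ^ (x + y).val = a ^ x.val * a ^ y.val := fun x y => by
      rw [← pow_add]; exact pow_of_mod_two ha (val_add_parity hm2 x y)
    have hsub : ∀ x y : ZMod m, a ^ (x - y).val = a ^ x.val * a ^ y.val := fun x y => by
      rw [← pow_add]; exact pow_of_mod_two ha (val_sub_parity hm2 x y)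
    have hswap : ∀ k l : ℕ, a ^ k * (b * a ^ l) = b * (a ^ k * a ^ l) := fun k l => by
      rw [← mul_assoc, hcomm, mul_assoc]
    rintro (i | i) (j | j)
    · show a ^ (i + j).val = a ^ i.val * a ^ j.val
      exact hadd i j
    · show b * a ^ (j - i).val = a ^ i.val * (b * a ^ j.val)
      rw [hswap, hsub j i, ← pow_add, ← pow_add, Nat.add_comm]
    · show b * a ^ (i + j).val = b * a ^ i.val * a ^ j.val
      rw [hadd i j, mul_assoc]
    · show a ^ (j - i).val = b * a ^ i.val * (b * a ^ j.val)
      rw [mul_assoc b (a ^ i.val), hswap, ← mul_assoc, hb', one_mul, hsub j i,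
        ← pow_add, ← pow_add, Nat.add_comm]

end NumHomAux

open NumHomAux in
theorem numHom_even_odd_coprime (m n : ℕ) (hm : 0 < m) (hn : 0 < n) (hme : Even m) (hno : Odd n)
    (hcop : Nat.gcd m n = 1) :
    Nat.card (DihedralGroup m →* DihedralGroup n) = 3 * n + 1 := by
  haveI : NeZero m := ⟨hm.ne'⟩
  haveI : NeZero n := ⟨hn.ne'⟩
  have hm2 : 2 ∣ m := hme.two_dvd
  have hmu : IsUnit ((m : ℕ) : ZMod n) := (ZMod.isUnit_iff_coprime m n).2 hcop
  have h2u : IsUnit ((2 : ℕ) : ZMod n) := (ZMod.isUnit_iff_coprime 2 n).2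
    (Nat.coprime_two_left.2 hno)
  have htwo : ∀ i : ZMod n, i + i = 0 → i = 0 := by
    intro i hi
    have h0 : ((2 : ℕ) : ZMod n) * i = ((2 : ℕ) : ZMod n) * 0 := by
      push_cast; rw [two_mul, hi, mul_zero]
    exact h2u.mul_left_cancel h0
  -- involutions classification
  have hsq : ∀ a : DihedralGroup n, a ^ m = 1 → a ^ 2 = 1 := by
    rintro (i | i) h
    · rw [NumHomAux.r_pow, one_def, r.injEq] at h
      have hi : i = 0 := by
        have h0 : ((m : ℕ) : ZMod n) * i = ((m : ℕ) : ZMod n) * 0 := by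
          rw [h, mul_zero]
        exact hmu.mul_left_cancel h0
      subst hi
      rw [NumHomAux.r_pow, mul_zero, one_def]
    · rw [pow_two, sr_mul_sr, sub_self, one_def]
  -- the subtype of commuting pairs of involutions
  set S := {p : DihedralGroup n × DihedralGroup n //
      p.1 ^ 2 = 1 ∧ p.2 ^ 2 = 1 ∧ p.1 * p.2 = p.2 * p.1} with hS
  -- equivalence between homs and S
  have e1 : (DihedralGroup m →* DihedralGroup n) ≃ S := by
    refine
      { toFun := fun φ => ⟨(φ (r 1), φ (sr 0)), ?_, ?_, ?_⟩
        invFun := fun p => mkHom hm2 p.2.1 p.2.2.1 p.2.2.2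
        left_inv := ?_
        right_inv := ?_ }
    · apply hsq
      rw [← map_pow, r_one_pow, ZMod.natCast_self, ← one_def, map_one]
    · rw [← map_pow, pow_two, sr_mul_sr, sub_self, ← one_def, map_one]
    · -- commuting
      have ha : (φ (r 1)) ^ 2 = 1 := by
        apply hsq
        rw [← map_pow, r_one_pow, ZMod.natCast_self, ← one_def, map_one]
      have hb2 : φ (sr 0) * φ (sr 0) = 1 := by
        rw [← map_mul, sr_mul_sr, sub_self, ← one_def, map_one]
      have hainv : (r (0 - 1) : DihedralGroup m) = (r 1)⁻¹ := by
        have : (r 1 : DihedralGroup m)⁻¹ = r (-1) := rfl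
        rw [this, zero_sub]
      have hbab : φ (sr 0) * φ (r 1) * φ (sr 0) = φ (r 1) := by
        rw [← map_mul, ← map_mul, sr_mul_r, zero_add, sr_mul_sr, hainv, map_inv,
          inv_eq_of_mul_eq_one_right (by rw [← pow_two, ha])]
      have h3 : φ (sr 0) * φ (r 1) * φ (sr 0) * φ (sr 0) = φ (r 1) * φ (sr 0) := by
        rw [hbab]
      rw [mul_assoc (φ (sr 0) * φ (r 1)), hb2, mul_one] at h3
      exact h3.symm
    · intro φ
      ext x
      have hr : ∀ i : ZMod m, φ (r i) = φ (r 1) ^ i.val := by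
        intro i
        rw [← map_pow, r_one_pow, ZMod.natCast_val, ZMod.cast_id]
      rcases x with i | i
      · show φ (r 1) ^ i.val = φ (r i)
        exact (hr i).symm
      · show φ (sr 0) * φ (r 1) ^ i.val = φ (sr i)
        rw [← hr i, ← map_mul, sr_mul_r, zero_add]
    · rintro ⟨⟨a, b⟩, ha, hb, hab⟩
      have hm1 : 1 < m := by rcases hm2 with ⟨k, rfl⟩; omega
      refine Subtype.ext (Prod.ext ?_ ?_)
      · show a ^ (1 : ZMod m).val = a
        rw [ZMod.val_one_eq_one_mod, Nat.mod_eq_of_lt hm1, pow_one]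
      · show b * a ^ (0 : ZMod m).val = b
        simp
  -- count S
  have e2 : (Option (ZMod n) ⊕ ZMod n × Bool) ≃ S := by
    apply Equiv.ofBijective (f := fun x =>
      match x with
      | Sum.inl none => (⟨(1, 1), by simp⟩ : S)
      | Sum.inl (some j) => ⟨(1, sr j), by simp [pow_two, one_def, -r_zero]⟩
      | Sum.inr (j, false) => ⟨(sr j, 1), by simp [pow_two, one_def, -r_zero]⟩
      | Sum.inr (j, true) => ⟨(sr j, sr j), by simp [pow_two, one_def, -r_zero]⟩)
    constructor
    · rintro x y h
      have h' := congrArg Subtype.val h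
      rcases x with (_ | j) | ⟨j, (_ | _)⟩ <;> rcases y with (_ | k) | ⟨k, (_ | _)⟩ <;>
        simp_all [one_def, Prod.ext_iff, -r_zero]
    · rintro ⟨⟨(x | x), (y | y)⟩, h1, h2, h3⟩ <;>
        (dsimp only at h1 h2 h3;
         simp only [pow_two, one_def, r_mul_r, sr_mul_sr, r.injEq, sr.injEq] at h1 h2 h3)
      ·
        obtain rfl := htwo _ h1
        obtain rfl := htwo _ h2
        exact ⟨Sum.inl none, rfl⟩
      · obtain rfl := htwo _ h1
        exact ⟨Sum.inl (some y), rfl⟩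
      · obtain rfl := htwo _ h2
        exact ⟨Sum.inr (x, false), rfl⟩
      · have h4 : (y - x) + (y - x) = 0 := by linear_combination h3
        have h5 : y = x := by
          have := htwo _ h4
          exact sub_eq_zero.mp this
        subst h5
        exact ⟨Sum.inr (y, true), rfl⟩
  have hcard := Nat.card_congr (e1.trans e2.symm)
  rw [hcard, Nat.card_eq_fintype_card, Fintype.card_sum, Fintype.card_option,
    Fintype.card_prod, ZMod.card, Fintype.card_bool]
  ring
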